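/- Let f : ℝ → ℝ₊ ∪ {∞} be a nonnegative, proper, closed, convex Legendre function with perspective cone K = epi f^π ⊂ ℝ³. Let z* = (−x*, s*, 0) with x* ≠ 0 and s* = (f*)_∞(x*) < ∞. Then the exposed face K ∩ {z*}^⊥ equals {(x,t,r) : x = αt, t ≥ 0, r ≥ t·f(α)}, where α is the unique point of bdry(dom f) ∩ dom f with x* ∈ N_{dom f}(α). -/

import Mathlib

open Set Filter Topology

noncomputable section

/-- `h` is proper: finite somewhere and never `⊥`. -/
def EProper (h : ℝ → EReal) : Prop := (∃ x, h x ≠ ⊤) ∧ ∀ x, h x ≠ ⊥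

/-- effective domain of an extended-real-valued function. -/
def EDom (h : ℝ → EReal) : Set ℝ := {x | h x ≠ ⊤}

/-- convexity of an extended-real-valued function on `ℝ`. -/
def EConvexFn (h : ℝ → EReal) : Prop :=
  ∀ x y a b : ℝ, 0 ≤ a → 0 ≤ b → a + b = 1 →
    h (a * x + b * y) ≤ (a : EReal) * h x + (b : EReal) * h y

/-- recession function of `h` with base point `y`:
`h_∞(d) = sup_{t>0} (h(y + t d) − h(y))/t`. -/
noncomputable def erec (h : ℝ → EReal) (y : ℝ) (d : ℝ) : EReal :=
  ⨆ t : {t : ℝ // 0 < t}, ((((t : ℝ)⁻¹ : ℝ) : EReal)) * (h (y + (t : ℝ) * d) - h y)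

/-- Fenchel conjugate. -/
noncomputable def econj (h : ℝ → EReal) (y : ℝ) : EReal :=
  ⨆ x : ℝ, ((x * y : ℝ) : EReal) - h x

/-- subdifferential of `h` at `x`. -/
def ESubdiff (h : ℝ → EReal) (x : ℝ) : Set ℝ :=
  {ξ | ∀ z : ℝ, h x + ((ξ * (z - x) : ℝ) : EReal) ≤ h z}

/-- essential smoothness witnessed by the derivative function `h'`. -/
def EssSmoothWith (h : ℝ → EReal) (h' : ℝ → ℝ) : Prop :=
  (interior (EDom h)).Nonempty ∧
  (∀ x ∈ interior (EDom h), HasDerivAt (fun z => (h z).toReal) (h' x) x) ∧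
  ∀ (u : ℕ → ℝ) (x0 : ℝ), (∀ n, u n ∈ interior (EDom h)) →
    Tendsto u atTop (𝓝 x0) → x0 ∈ frontier (EDom h) →
    Tendsto (fun n => |h' (u n)|) atTop atTop

def EssSmooth (h : ℝ → EReal) : Prop := ∃ h', EssSmoothWith h h'

/-- essential strict convexity: strict convexity on every convex subset of `dom ∂h`. -/
def EssStrictConvex (h : ℝ → EReal) : Prop :=
  ∀ s : Set ℝ, s ⊆ {x | (ESubdiff h x).Nonempty} → Convex ℝ s →
    ∀ x ∈ s, ∀ y ∈ s, x ≠ y → ∀ a b : ℝ, 0 < a → 0 < b → a + b = 1 →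
      h (a * x + b * y) < (a : EReal) * h x + (b : EReal) * h y

/-- Legendre function: proper, closed, convex, essentially smooth and
essentially strictly convex. -/
def ELegendre (h : ℝ → EReal) : Prop :=
  EProper h ∧ LowerSemicontinuous h ∧ EConvexFn h ∧ EssSmooth h ∧ EssStrictConvex h

/-- closed perspective function of `f`, where `finf` plays the role of the
recession function of `f`. -/
noncomputable def persp (f finf : ℝ → EReal) (x t : ℝ) : EReal :=
  if 0 < t then (t : EReal) * f (x / t) else if t = 0 then finf x else ⊤

/-- epigraph of the perspective function, as a subset of `ℝ³`. -/
def perspEpi (f finf : ℝ → EReal) : Set (ℝ × ℝ × ℝ) :=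
  {p | persp f finf p.1 p.2.1 ≤ (p.2.2 : EReal)}

/-- For a nonnegative Legendre `f`, with `z* = (−x*, s*, 0)`,
`x* ≠ 0`, `s* = (f*)_∞(x*) < ∞`, and `α` the (unique) point of
`bdry(dom f) ∩ dom f` with `x* ∈ N_{dom f}(α)`, the exposed face
`epi f^π ∩ {z*}^⊥` equals `{(x,t,r) : x = αt, t ≥ 0, r ≥ t f(α)}`. -/
theorem exposed_face_halfplane (f : ℝ → EReal) (hNonneg : ∀ x, 0 ≤ f x)
    (hLeg : ELegendre f) (y : ℝ) (hy : y ∈ EDom f)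
    (h0 : (0 : ℝ) ∈ EDom (econj f))
    (xstar sstar α : ℝ) (hx : xstar ≠ 0)
    (hs : erec (econj f) 0 xstar = (sstar : EReal))
    (hα : α ∈ frontier (EDom f) ∩ EDom f)
    (hNormal : ∀ w ∈ EDom f, xstar * (w - α) ≤ 0) :
    perspEpi f (erec f y) ∩
        {p : ℝ × ℝ × ℝ | p.1 * (-xstar) + p.2.1 * sstar = 0}
      = {p : ℝ × ℝ × ℝ | 0 ≤ p.2.1 ∧ p.1 = α * p.2.1 ∧
          (p.2.1 : EReal) * f α ≤ (p.2.2 : EReal)} := by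
  obtain ⟨hαfr, hαdom⟩ := hα
  -- f is real-valued on its domain
  have freal : ∀ w, f w ≠ ⊤ → ∃ b : ℝ, f w = (b : EReal) ∧ 0 ≤ b := by
    intro w hw
    have hb : f w ≠ ⊥ := by
      intro hB; have := hNonneg w; rw [hB] at this; simp at this
    refine ⟨(f w).toReal, (EReal.coe_toReal hw hb).symm, ?_⟩
    have := hNonneg w
    rw [← EReal.coe_toReal hw hb, EReal.coe_nonneg] at this; exact this
  obtain ⟨cy, hcy, hcy0⟩ := freal y hy
  -- econj f 0 is a real number c
  have hterm0 : ∀ w, f w ≠ ⊤ → ∀ b : ℝ, f w = (b : EReal) →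
      ((-b : ℝ) : EReal) ≤ econj f 0 := by
    intro w hw b hb
    have h1 : ((w * 0 : ℝ) : EReal) - f w ≤ econj f 0 := by
      unfold econj
      exact le_iSup (fun u : ℝ => ((u * 0 : ℝ) : EReal) - f u) w
    rw [hb, ← EReal.coe_sub] at h1
    have : (w * 0 - b : ℝ) = -b := by ring
    rwa [this] at h1
  have hg0bot : econj f 0 ≠ ⊥ := by
    intro hB
    have := hterm0 y hy cy hcy
    rw [hB] at this
    exact (EReal.coe_ne_bot _) (le_bot_iff.1 this)
  obtain ⟨c, hc⟩ : ∃ c : ℝ, econj f 0 = (c : EReal) :=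
    ⟨(econj f 0).toReal, (EReal.coe_toReal h0 hg0bot).symm⟩
  -- Lemma A : xstar * w ≤ sstar for all w in dom f
  have lemA : ∀ w, w ∈ EDom f → xstar * w ≤ sstar := by
    intro w hw
    obtain ⟨b, hb, hb0⟩ := freal w hw
    have key : ∀ t : ℝ, 0 < t → xstar * w - (b + c) / t ≤ sstar := by
      intro t ht
      have h2 : ((t⁻¹ : ℝ) : EReal) * (econj f (0 + t * xstar) - econj f 0)
          ≤ (sstar : EReal) := by
        rw [← hs]; unfold erec
        exact le_iSup (fun s : {u : ℝ // 0 < u} =>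
          (((s : ℝ)⁻¹ : ℝ) : EReal) * (econj f (0 + (s : ℝ) * xstar) - econj f 0)) ⟨t, ht⟩
      rw [zero_add, hc] at h2
      have h1 : ((w * (t * xstar) - b : ℝ) : EReal) ≤ econj f (t * xstar) := by
        have := le_iSup (fun u : ℝ => ((u * (t * xstar) : ℝ) : EReal) - f u) w
        rw [EReal.coe_sub]
        rw [hb] at this
        exact this
      have hT : econj f (t * xstar) ≠ ⊤ := by
        intro hTT
        rw [hTT, EReal.top_sub_coe, EReal.mul_top_of_pos (EReal.coe_pos.2 (inv_pos.2 ht))] at h2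
        exact (EReal.coe_ne_top sstar) (top_le_iff.1 h2)
      have hB : econj f (t * xstar) ≠ ⊥ := by
        intro hBB; rw [hBB] at h1; exact (EReal.coe_ne_bot _) (le_bot_iff.1 h1)
      obtain ⟨d, hd⟩ : ∃ d : ℝ, econj f (t * xstar) = (d : EReal) :=
        ⟨(econj f (t * xstar)).toReal, (EReal.coe_toReal hT hB).symm⟩
      rw [hd, ← EReal.coe_sub, ← EReal.coe_mul, EReal.coe_le_coe_iff] at h2
      rw [hd, EReal.coe_le_coe_iff] at h1
      have h3 : t⁻¹ * (w * (t * xstar) - b - c) ≤ t⁻¹ * (d - c) :=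
        mul_le_mul_of_nonneg_left (by linarith) (by positivity)
      have h4 : t⁻¹ * (w * (t * xstar) - b - c) = xstar * w - (b + c) / t := by
        field_simp; ring
      linarith
    refine le_of_forall_pos_le_add ?_
    intro ε hε
    have htp : (0 : ℝ) < (|b + c| + 1) / ε := by positivity
    have h4 := key _ htp
    have h5 : (b + c) / ((|b + c| + 1) / ε) ≤ ε := by
      rw [div_div_eq_mul_div, div_le_iff₀ (by positivity)]
      nlinarith [le_abs_self (b + c), abs_nonneg (b + c)]
    linarith
  -- Lemma B : sstar ≤ xstar * α
  have lemB : sstar ≤ xstar * α := by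
    have hsup : erec (econj f) 0 xstar ≤ ((xstar * α : ℝ) : EReal) := by
      unfold erec
      apply iSup_le
      rintro ⟨t, ht⟩
      simp only [zero_add]
      rw [hc]
      have hub : econj f (t * xstar) ≤ ((c + t * (xstar * α) : ℝ) : EReal) := by
        unfold econj
        apply iSup_le
        intro w
        by_cases hw : f w = ⊤
        · rw [hw]; simp
        · obtain ⟨b, hb, hb0⟩ := freal w hw
          have hwx : xstar * w ≤ xstar * α := by nlinarith [hNormal w hw]
          have hcb : -b ≤ c := by
            have := hterm0 w hw b hb
            rw [hc, EReal.coe_le_coe_iff] at this; exact this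
          rw [hb, ← EReal.coe_sub, EReal.coe_le_coe_iff]
          nlinarith [mul_le_mul_of_nonneg_left hwx ht.le]
      rcases eq_or_ne (econj f (t * xstar)) ⊥ with hB | hB
      · rw [hB, EReal.bot_sub, EReal.mul_bot_of_pos (EReal.coe_pos.2 (inv_pos.2 ht))]
        exact bot_le
      · have hT : econj f (t * xstar) ≠ ⊤ := by
          intro hTT; rw [hTT] at hub; exact (EReal.coe_ne_top _) (top_le_iff.1 hub)
        obtain ⟨d, hd⟩ : ∃ d : ℝ, econj f (t * xstar) = (d : EReal) :=
          ⟨(econj f (t * xstar)).toReal, (EReal.coe_toReal hT hB).symm⟩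
        rw [hd, EReal.coe_le_coe_iff] at hub
        rw [hd, ← EReal.coe_sub, ← EReal.coe_mul, EReal.coe_le_coe_iff]
        have h3 : t⁻¹ * (d - c) ≤ t⁻¹ * (t * (xstar * α)) :=
          mul_le_mul_of_nonneg_left (by linarith) (by positivity)
        have h4 : t⁻¹ * (t * (xstar * α)) = xstar * α := by field_simp
        linarith
    rw [hs] at hsup
    exact EReal.coe_le_coe_iff.1 hsup
  have sEq : sstar = xstar * α := le_antisymm lemB (lemA α hαdom)
  -- erec f y 0 = 0
  have erec0 : erec f y 0 = 0 := by
    unfold erec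
    have hconst : ∀ s : {u : ℝ // 0 < u},
        (((s : ℝ)⁻¹ : ℝ) : EReal) * (f (y + (s : ℝ) * 0) - f y) = 0 := by
      intro s
      rw [mul_zero, add_zero, hcy, ← EReal.coe_sub, ← EReal.coe_mul]
      norm_num
    haveI : Nonempty {u : ℝ // 0 < u} := ⟨⟨1, one_pos⟩⟩
    simp only [hconst, iSup_const]
  obtain ⟨aα, haα, haα0⟩ := freal α hαdom
  -- main extensionality
  ext ⟨x, t, r⟩
  simp only [perspEpi, persp, Set.mem_inter_iff, Set.mem_setOf_eq]
  constructor
  · rintro ⟨hepi, hface⟩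
    rcases lt_trichotomy 0 t with ht | ht | ht
    · rw [if_pos ht] at hepi
      have e1 : xstar * (x / t) = xstar * α := by
        have ht' : t ≠ 0 := ht.ne'
        field_simp
        have hc2 := mul_right_cancel₀ hx (show x * xstar = (t * α) * xstar by rw [sEq] at hface; linarith)
        linarith
      have hxα : x / t = α := mul_left_cancel₀ hx e1
      have hxeq : x = α * t := by
        rw [← hxα]; field_simp
      refine ⟨ht.le, hxeq, ?_⟩
      rw [← hxα]; exact hepi
    · subst ht
      rw [if_neg (lt_irrefl 0), if_pos rfl] at hepi
      have hx0 : x = 0 := by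
        have hxx : x * xstar = 0 := by linarith [hface]
        rcases mul_eq_zero.1 hxx with h | h
        · exact h
        · exact absurd h hx
      refine ⟨le_refl 0, by rw [hx0]; ring, ?_⟩
      rw [hx0, erec0] at hepi
      rw [EReal.coe_zero, EReal.zero_mul]
      exact hepi
    · rw [if_neg (by linarith), if_neg (by linarith)] at hepi
      exact absurd (top_le_iff.1 hepi) (EReal.coe_ne_top r)
  · rintro ⟨ht0, hxeq, hr⟩
    rcases ht0.lt_or_eq with ht | ht
    · constructor
      · rw [if_pos ht, hxeq, mul_div_assoc, div_self ht.ne', mul_one]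
        exact hr
      · rw [hxeq, sEq]; ring
    · subst ht
      have hx0 : x = 0 := by rw [hxeq]; ring
      constructor
      · rw [if_neg (lt_irrefl 0), if_pos rfl, hx0, erec0]
        rw [EReal.coe_zero, EReal.zero_mul] at hr
        exact hr
      · rw [hx0]; ring
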